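/- arXiv:2507.17854 — 2 statements merged into one kernel-verified Lean document; each statement's English description precedes it below -/
import Mathlib

section
/- Let L(X) be the free Lie algebra on a set X over a field, let S ⊆ X, and let 𝔞 be the ideal of L(X) generated by X \ S. Then L(X) is, as a vector space, the internal direct sum of the Lie subalgebra generated by S and the ideal 𝔞. -/
open FreeLieAlgebra

section Aux
open scoped Classical

variable (K : Type*) [Field K] {X : Type*} (S : Set X)

/-- The retraction `L(X) → L(X)` killing generators outside `S`. -/
noncomputable def elimRetract : FreeLieAlgebra K X →ₗ⁅K⁆ FreeLieAlgebra K X :=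
  lift K (fun x => if x ∈ S then of K x else 0)

lemma elimRetract_of_mem {x : X} (hx : x ∈ S) : elimRetract K S (of K x) = of K x := by
  simp [elimRetract, hx]

lemma elimRetract_of_not_mem {x : X} (hx : x ∉ S) : elimRetract K S (of K x) = 0 := by
  simp [elimRetract, hx]

/-- The equalizer of `elimRetract` and the identity, as a Lie subalgebra. -/
noncomputable def elimEqualizer : LieSubalgebra K (FreeLieAlgebra K X) :=
  { LinearMap.ker ((elimRetract K S).toLinearMap - LinearMap.id) with
    lie_mem' := by
      intro a b ha hb
      have ha' : elimRetract K S a = a := by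
        have h : (((elimRetract K S).toLinearMap - LinearMap.id : FreeLieAlgebra K X →ₗ[K] FreeLieAlgebra K X)) a = 0 := ha
        simpa [sub_eq_zero] using h
      have hb' : elimRetract K S b = b := by
        have h : (((elimRetract K S).toLinearMap - LinearMap.id : FreeLieAlgebra K X →ₗ[K] FreeLieAlgebra K X)) b = 0 := hb
        simpa [sub_eq_zero] using h
      show (((elimRetract K S).toLinearMap - LinearMap.id : FreeLieAlgebra K X →ₗ[K] FreeLieAlgebra K X)) ⁅a, b⁆ = 0
      simp [sub_eq_zero, LieHom.map_lie, ha', hb'] }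

lemma mem_elimEqualizer_iff (a : FreeLieAlgebra K X) :
    a ∈ elimEqualizer K S ↔ elimRetract K S a = a := by
  change a ∈ LinearMap.ker _ ↔ _
  simp [sub_eq_zero]

lemma elimRetract_fixed_of_mem_span
    {a : FreeLieAlgebra K X}
    (ha : a ∈ LieSubalgebra.lieSpan K (FreeLieAlgebra K X) (of K '' S)) :
    elimRetract K S a = a := by
  rw [← mem_elimEqualizer_iff]
  refine LieSubalgebra.lieSpan_le.2 ?_ ha
  rintro _ ⟨x, hx, rfl⟩
  rw [SetLike.mem_coe, mem_elimEqualizer_iff]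
  exact elimRetract_of_mem K S hx

lemma elimIdeal_le_ker :
    (LieSubmodule.lieSpan K (FreeLieAlgebra K X) (of K '' Sᶜ) :
      LieIdeal K (FreeLieAlgebra K X)) ≤ (elimRetract K S).ker := by
  rw [LieSubmodule.lieSpan_le]
  rintro _ ⟨x, hx, rfl⟩
  rw [SetLike.mem_coe, LieHom.mem_ker]
  exact elimRetract_of_not_mem K S hx

/-- The quotient map by the ideal, as a Lie algebra morphism. -/
noncomputable def elimQuot :
    FreeLieAlgebra K X →ₗ⁅K⁆
      FreeLieAlgebra K X ⧸ (LieSubmodule.lieSpan K (FreeLieAlgebra K X) (of K '' Sᶜ) :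
        LieIdeal K (FreeLieAlgebra K X)) :=
  { (LieSubmodule.lieSpan K (FreeLieAlgebra K X) (of K '' Sᶜ) :
      LieIdeal K (FreeLieAlgebra K X)).toSubmodule.mkQ with
    map_lie' := fun {_ _} => rfl }

lemma elimQuot_comp_retract :
    (elimQuot K S).comp (elimRetract K S) = elimQuot K S := by
  apply FreeLieAlgebra.hom_ext
  intro x
  by_cases hx : x ∈ S
  · simp [LieHom.comp_apply, elimRetract_of_mem K S hx]
  · simp only [LieHom.comp_apply, elimRetract_of_not_mem K S hx, map_zero]
    symm
    have hmem : of K x ∈ (LieSubmodule.lieSpan K (FreeLieAlgebra K X) (of K '' Sᶜ) :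
        LieIdeal K (FreeLieAlgebra K X)) :=
      LieSubmodule.subset_lieSpan ⟨x, hx, rfl⟩
    show (LieSubmodule.lieSpan K (FreeLieAlgebra K X) (of K '' Sᶜ) :
        LieIdeal K (FreeLieAlgebra K X)).toSubmodule.mkQ (of K x) = 0
    simpa [Submodule.Quotient.mk_eq_zero] using hmem

lemma sub_retract_mem_ideal (a : FreeLieAlgebra K X) :
    a - elimRetract K S a ∈
      (LieSubmodule.lieSpan K (FreeLieAlgebra K X) (of K '' Sᶜ) :
        LieIdeal K (FreeLieAlgebra K X)) := by
  have h : elimQuot K S (elimRetract K S a) = elimQuot K S a := by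
    have := elimQuot_comp_retract K S
    calc elimQuot K S (elimRetract K S a)
        = ((elimQuot K S).comp (elimRetract K S)) a := rfl
      _ = elimQuot K S a := by rw [this]
  have h0 : (LieSubmodule.lieSpan K (FreeLieAlgebra K X) (of K '' Sᶜ) :
      LieIdeal K (FreeLieAlgebra K X)).toSubmodule.mkQ (a - elimRetract K S a) = 0 := by
    show elimQuot K S (a - elimRetract K S a) = 0
    rw [map_sub, h, sub_self]
  rw [Submodule.mkQ_apply, Submodule.Quotient.mk_eq_zero] at h0
  exact h0

lemma elimRetract_mem_span (a : FreeLieAlgebra K X) :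
    elimRetract K S a ∈ LieSubalgebra.lieSpan K (FreeLieAlgebra K X) (of K '' S) := by
  set A := LieSubalgebra.lieSpan K (FreeLieAlgebra K X) (of K '' S) with hA
  let ψ : FreeLieAlgebra K X →ₗ⁅K⁆ A :=
    lift K (fun x => if hx : x ∈ S then
      ⟨of K x, LieSubalgebra.subset_lieSpan ⟨x, hx, rfl⟩⟩ else 0)
  have h : elimRetract K S = A.incl.comp ψ := by
    apply FreeLieAlgebra.hom_ext
    intro x
    by_cases hx : x ∈ S
    · rw [elimRetract_of_mem K S hx]
      simp [ψ, LieHom.comp_apply, lift_of_apply, hx]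
    · rw [elimRetract_of_not_mem K S hx]
      simp [ψ, LieHom.comp_apply, lift_of_apply, hx]
  rw [h]
  exact (ψ a).2

end Aux

/-- Elimination theorem, part (a): for `S ⊆ X`, the free Lie algebra `L(X)` is,
as a vector space, the internal direct sum of the Lie subalgebra generated by `S`
and the ideal generated by `X \ S`. -/
theorem free_lie_algebra_elimination_direct_sum (K : Type*) [Field K] {X : Type*}
    (S : Set X) :
    IsCompl
      (LieSubalgebra.lieSpan K (FreeLieAlgebra K X) (of K '' S)).toSubmodule
      (LieSubmodule.lieSpan K (FreeLieAlgebra K X) (of K '' Sᶜ) :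
        LieIdeal K (FreeLieAlgebra K X)).toSubmodule := by
  constructor
  · rw [disjoint_iff_inf_le]
    rintro a ⟨haA, haI⟩
    have h1 : elimRetract K S a = a := elimRetract_fixed_of_mem_span K S haA
    have h2 : elimRetract K S a = 0 := by
      have := elimIdeal_le_ker K S haI
      rwa [LieHom.mem_ker] at this
    simpa [h2] using h1.symm
  · rw [codisjoint_iff_le_sup]
    intro a _
    have h1 : elimRetract K S a ∈
        (LieSubalgebra.lieSpan K (FreeLieAlgebra K X) (of K '' S)).toSubmodule :=
      elimRetract_mem_span K S a
    have h2 := sub_retract_mem_ideal K S a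
    have heq : a = elimRetract K S a + (a - elimRetract K S a) := by abel
    rw [heq]
    exact Submodule.add_mem_sup h1 h2
end

section
/- Let L(X) be the free Lie algebra on a set X over a field, S ⊆ X, and T the set of finite sequences (s₁, …, sₙ, x) with n ≥ 0, sᵢ ∈ S, and x ∈ X \ S. Then the map sending (s₁, …, sₙ, x) to ad(s₁)⋯ad(sₙ)(x) extends to a Lie algebra isomorphism from the free Lie algebra L(T) onto the ideal 𝔞 of L(X) generated by X \ S. -/
namespace Elim

variable {R : Type*} [CommRing R] {L A : Type*}
  [LieRing L] [LieAlgebra R L] [LieRing A] [LieAlgebra R A]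

/-- Semidirect product of Lie algebras along an action by derivations. -/
def Sd (_ρ : L →ₗ⁅R⁆ LieDerivation R A A) : Type _ := L × A

namespace Sd

variable (ρ : L →ₗ⁅R⁆ LieDerivation R A A)

instance : AddCommGroup (Sd ρ) := inferInstanceAs (AddCommGroup (L × A))
instance : Module R (Sd ρ) := inferInstanceAs (Module R (L × A))

variable {ρ}

/-- Constructor. -/
def mk (l : L) (a : A) : Sd ρ := (l, a)
/-- First component. -/
def l (x : Sd ρ) : L := (show L × A from x).1
/-- Second component. -/
def a (x : Sd ρ) : A := (show L × A from x).2

@[simp] lemma l_mk (x : L) (y : A) : (mk x y : Sd ρ).l = x := rfl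
@[simp] lemma a_mk (x : L) (y : A) : (mk x y : Sd ρ).a = y := rfl
@[simp] lemma l_add (x y : Sd ρ) : (x + y).l = x.l + y.l := rfl
@[simp] lemma a_add (x y : Sd ρ) : (x + y).a = x.a + y.a := rfl
@[simp] lemma l_smul (t : R) (x : Sd ρ) : (t • x).l = t • x.l := rfl
@[simp] lemma a_smul (t : R) (x : Sd ρ) : (t • x).a = t • x.a := rfl
@[simp] lemma l_zero : (0 : Sd ρ).l = 0 := rfl
@[simp] lemma a_zero : (0 : Sd ρ).a = 0 := rfl

@[ext] lemma ext {x y : Sd ρ} (h1 : x.l = y.l) (h2 : x.a = y.a) : x = y :=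
  Prod.ext h1 h2

instance : LieRing (Sd ρ) where
  bracket x y := mk ⁅x.l, y.l⁆ (⁅x.a, y.a⁆ + ρ x.l y.a - ρ y.l x.a)
  add_lie x y z := by
    ext <;> simp [add_lie, lie_add, map_add] <;> abel
  lie_add x y z := by
    ext <;> simp [add_lie, lie_add, map_add] <;> abel
  lie_self x := by ext <;> simp
  leibniz_lie x y z := by
    ext
    · show ⁅x.l, ⁅y.l, z.l⁆⁆ = ⁅⁅x.l, y.l⁆, z.l⁆ + ⁅y.l, ⁅x.l, z.l⁆⁆
      exact leibniz_lie _ _ _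
    · show ⁅x.a, ⁅y.a, z.a⁆ + ρ y.l z.a - ρ z.l y.a⁆
          + ρ x.l (⁅y.a, z.a⁆ + ρ y.l z.a - ρ z.l y.a) - ρ ⁅y.l, z.l⁆ x.a =
        (⁅⁅x.a, y.a⁆ + ρ x.l y.a - ρ y.l x.a, z.a⁆ + ρ ⁅x.l, y.l⁆ z.a
          - ρ z.l (⁅x.a, y.a⁆ + ρ x.l y.a - ρ y.l x.a))
        + (⁅y.a, ⁅x.a, z.a⁆ + ρ x.l z.a - ρ z.l x.a⁆
          + ρ y.l (⁅x.a, z.a⁆ + ρ x.l z.a - ρ z.l x.a) - ρ ⁅x.l, z.l⁆ y.a)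
      simp only [lie_add, add_lie, lie_sub, sub_lie, map_add, map_sub,
        LieHom.map_lie, LieDerivation.commutator_apply, LieDerivation.apply_lie_eq_add,
        lie_lie]
      rw [← lie_skew ((ρ z.l) x.a) y.a]
      abel

@[simp] lemma l_lie (x y : Sd ρ) : ⁅x, y⁆.l = ⁅x.l, y.l⁆ := rfl
@[simp] lemma a_lie (x y : Sd ρ) :
    ⁅x, y⁆.a = ⁅x.a, y.a⁆ + ρ x.l y.a - ρ y.l x.a := rfl

instance : LieAlgebra R (Sd ρ) where
  lie_smul t x y := by
    ext
    · show ⁅x.l, t • y.l⁆ = t • ⁅x.l, y.l⁆; simp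
    · show ⁅x.a, t • y.a⁆ + ρ x.l (t • y.a) - ρ (t • y.l) x.a
          = t • (⁅x.a, y.a⁆ + ρ x.l y.a - ρ y.l x.a)
      simp [smul_sub, smul_add]

variable (ρ)

/-- Projection onto the first factor, a Lie algebra hom. -/
def fstHom : Sd ρ →ₗ⁅R⁆ L where
  toFun := l
  map_add' _ _ := rfl
  map_smul' _ _ := rfl
  map_lie' := rfl

/-- Inclusion of the second factor, a Lie algebra hom. -/
def inrHom : A →ₗ⁅R⁆ Sd ρ where
  toFun a := mk 0 a
  map_add' x y := by ext <;> simp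
  map_smul' t x := by ext <;> simp
  map_lie' {x y} := by ext <;> simp

@[simp] lemma fstHom_apply (x : Sd ρ) : fstHom ρ x = x.l := rfl
@[simp] lemma inrHom_apply (x : A) : inrHom ρ x = mk 0 x := rfl

lemma inrHom_injective : Function.Injective (inrHom ρ) := fun x y h => by
  simpa using congrArg a h

end Sd

/-- Type synonym: `A` with the abelian (trivial) Lie bracket. -/
def Ab (A : Type*) : Type _ := A

namespace Ab

variable (A)

instance : AddCommGroup (Ab A) := inferInstanceAs (AddCommGroup A)
instance : Module R (Ab A) := inferInstanceAs (Module R A)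

instance : LieRing (Ab A) where
  bracket _ _ := 0
  add_lie _ _ _ := (add_zero 0).symm
  lie_add _ _ _ := (add_zero 0).symm
  lie_self _ := rfl
  leibniz_lie _ _ _ := (add_zero 0).symm

instance : LieAlgebra R (Ab A) := ⟨fun t x y => (smul_zero t).symm⟩

@[simp] lemma lie_eq_zero (x y : Ab A) : ⁅x, y⁆ = (0 : Ab A) := rfl

variable {A} in
/-- Identity map `Ab A → A`. -/
def un (m : Ab A) : A := m
variable {A} in
/-- Identity map `A → Ab A`. -/
def mk (a : A) : Ab A := a

@[simp] lemma un_mk (a : A) : un (mk a : Ab A) = a := rfl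
@[simp] lemma mk_un (m : Ab A) : mk (un m) = m := rfl
@[simp] lemma un_add (m n : Ab A) : un (m + n) = un m + un n := rfl
@[simp] lemma un_smul (t : R) (m : Ab A) : un (t • m) = t • un m := rfl
@[simp] lemma un_zero : un (0 : Ab A) = (0 : A) := rfl
@[simp] lemma un_inj {m n : Ab A} : un m = un n ↔ m = n := Iff.rfl

/-- The adjoint action of `A` on its abelianized self, as a Lie hom into derivations. -/
def ad : A →ₗ⁅R⁆ LieDerivation R (Ab A) (Ab A) where
  toFun x :=
    { toLinearMap :=
        { toFun := fun m => mk ⁅x, un m⁆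
          map_add' := fun m n => congrArg mk (lie_add x (un m) (un n))
          map_smul' := fun t m => congrArg mk (lie_smul t x (un m)) }
      leibniz' := fun m n => by
        show mk ⁅x, un ⁅m, n⁆⁆ = (⁅m, _⁆ : Ab A) - ⁅n, _⁆
        simp only [lie_eq_zero]
        show mk ⁅x, (0 : A)⁆ = (0 : Ab A) - 0
        simp only [lie_zero, sub_zero]
        rfl }
  map_add' x y := by ext m; exact congrArg un (congrArg mk (add_lie x y (un m)))
  map_smul' t x := by ext m; exact congrArg un (congrArg mk (smul_lie t x (un m)))
  map_lie' {x y} := by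
    ext m
    show un (mk ⁅⁅x, y⁆, un m⁆) = un (mk ⁅x, un (mk ⁅y, un m⁆)⁆ - mk ⁅y, un (mk ⁅x, un m⁆)⁆)
    show ⁅⁅x, y⁆, un m⁆ = ⁅x, ⁅y, un m⁆⁆ - ⁅y, ⁅x, un m⁆⁆
    rw [lie_lie]

@[simp] lemma ad_apply (x : A) (m : Ab A) : ad (R := R) A x m = mk ⁅x, un m⁆ := rfl

end Ab

section Main

open FreeLieAlgebra

variable (K : Type*) [Field K] {X : Type*} (S : Set X)

/-- The generating set of the ideal: lists over `S` with a final letter outside `S`. -/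
abbrev T := List ↥S × ↥Sᶜ

/-- The free Lie algebra on `T`. -/
abbrev FL := FreeLieAlgebra K (T S)

/-- The value of a generator: iterated bracket. -/
noncomputable def Fgen (t : T S) : FreeLieAlgebra K X :=
  (t.1.map Subtype.val).foldr (fun s b => ⁅of K s, b⁆) (of K (t.2 : X))

lemma Fgen_nil (x : ↥Sᶜ) : Fgen K S ([], x) = of K (x : X) := rfl

lemma Fgen_cons (s : ↥S) (l : List ↥S) (x : ↥Sᶜ) :
    Fgen K S (s :: l, x) = ⁅of K (s : X), Fgen K S (l, x)⁆ := rfl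

/-- The candidate isomorphism onto the ideal. -/
noncomputable def fmap : FL K S →ₗ⁅K⁆ FreeLieAlgebra K X := lift K (Fgen K S)

@[simp] lemma fmap_of (t : T S) : fmap K S (of K t) = Fgen K S t :=
  lift_of_apply _ _

/-- Auxiliary hom to the semidirect product with the abelianized adjoint module,
used to construct a derivation prepending a letter `s`. -/
noncomputable def phi (s : ↥S) : FL K S →ₗ⁅K⁆ Sd (Ab.ad (R := K) (FL K S)) :=
  lift K fun t => Sd.mk (of K t) (Ab.mk (of K ((s :: t.1, t.2) : T S)))

lemma phi_fst (s : ↥S) (x : FL K S) : (phi K S s x).l = x := by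
  have h : (Sd.fstHom (Ab.ad (R := K) (FL K S))).comp (phi K S s) = LieHom.id :=
    FreeLieAlgebra.hom_ext fun t => by
      simp [phi, lift_of_apply]
  exact LieHom.congr_fun h x

/-- The derivation of `FL` prepending the letter `s` on generators. -/
noncomputable def dDer (s : ↥S) : LieDerivation K (FL K S) (FL K S) where
  toLinearMap :=
    { toFun := fun x => Ab.un ((phi K S s x).a)
      map_add' := fun x y => by
        show Ab.un ((phi K S s (x + y)).a) = Ab.un ((phi K S s x).a) + Ab.un ((phi K S s y).a)
        rw [map_add]; rfl
      map_smul' := fun t x => by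
        show Ab.un ((phi K S s (t • x)).a) = t • Ab.un ((phi K S s x).a)
        rw [map_smul]; rfl }
  leibniz' := fun x y => by
    show Ab.un ((phi K S s ⁅x, y⁆).a) = _
    rw [LieHom.map_lie, Sd.a_lie, phi_fst, phi_fst]
    show Ab.un (0 + Ab.mk ⁅x, Ab.un ((phi K S s y).a)⁆ - Ab.mk ⁅y, Ab.un ((phi K S s x).a)⁆) = _
    rw [zero_add]
    rfl

@[simp] lemma dDer_of (s : ↥S) (t : T S) :
    dDer K S s (of K t) = of K ((s :: t.1, t.2) : T S) := by
  show Ab.un ((phi K S s (of K t)).a) = _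
  rw [phi, lift_of_apply]
  rfl

/-- The action of the free Lie algebra on `S` on `FL` by derivations. -/
noncomputable def rhoS : FreeLieAlgebra K ↥S →ₗ⁅K⁆ LieDerivation K (FL K S) (FL K S) :=
  lift K (dDer K S)

/-- The semidirect product receiving the splitting of `L(X)`. -/
abbrev P := Sd (rhoS K S)

open Classical in
/-- The splitting `L(X) → P`. -/
noncomputable def gmap : FreeLieAlgebra K X →ₗ⁅K⁆ P K S :=
  lift K fun x =>
    if hx : x ∈ S then Sd.mk (of K (⟨x, hx⟩ : ↥S)) 0
    else Sd.mk 0 (of K ((([], ⟨x, hx⟩) : T S)))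

lemma gmap_fmap_of (t : T S) :
    gmap K S (fmap K S (of K t)) = Sd.inrHom (rhoS K S) (of K t) := by
  rw [fmap_of]
  obtain ⟨l, x⟩ := t
  induction l with
  | nil =>
    rw [Fgen_nil, gmap, lift_of_apply]
    rw [dif_neg x.2]
    simp [Sd.inrHom_apply]
  | cons s l ih =>
    rw [Fgen_cons, LieHom.map_lie, ih]
    rw [gmap, lift_of_apply, dif_pos s.2]
    ext
    · simp
    · show ⁅(0 : FL K S), of K ((l, x) : T S)⁆ +
        rhoS K S (of K (⟨(s : X), s.2⟩ : ↥S)) (of K ((l, x) : T S)) - rhoS K S 0 0 = _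
      rw [rhoS, lift_of_apply, map_zero]
      simp [dDer_of]

lemma fmap_injective : Function.Injective (fmap K S) := by
  have h : (gmap K S).comp (fmap K S) = Sd.inrHom (rhoS K S) :=
    FreeLieAlgebra.hom_ext fun t => gmap_fmap_of K S t
  intro x y hxy
  apply Sd.inrHom_injective (rhoS K S)
  rw [← LieHom.congr_fun h x, ← LieHom.congr_fun h y]
  exact congrArg (gmap K S) hxy

/-- A Lie subalgebra of a free Lie algebra containing all generators is everything. -/
lemma mem_of_forall_of {Y : Type*} (Q : LieSubalgebra K (FreeLieAlgebra K Y))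
    (h : ∀ y, of K y ∈ Q) (a : FreeLieAlgebra K Y) : a ∈ Q := by
  let u : FreeLieAlgebra K Y →ₗ⁅K⁆ Q := lift K fun y => ⟨of K y, h y⟩
  have hu : Q.incl.comp u = LieHom.id :=
    FreeLieAlgebra.hom_ext fun y => by simp [u, lift_of_apply]
  have : Q.incl (u a) = a := LieHom.congr_fun hu a
  rw [← this]
  exact (u a).2


/-- The ideal generated by the letters outside `S`. -/
noncomputable abbrev Idl : LieIdeal K (FreeLieAlgebra K X) :=
  LieSubmodule.lieSpan K (FreeLieAlgebra K X) (of K '' Sᶜ)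

lemma Fgen_mem_ideal (t : T S) : Fgen K S t ∈ Idl K S := by
  obtain ⟨l, x⟩ := t
  induction l with
  | nil =>
    exact LieSubmodule.subset_lieSpan ⟨(x : X), x.2, rfl⟩
  | cons s l ih =>
    rw [Fgen_cons]
    exact LieSubmodule.lie_mem _ ih

lemma fmap_mem_ideal (a : FL K S) : fmap K S a ∈ Idl K S := by
  let Q : LieSubalgebra K (FL K S) :=
    { Submodule.comap (fmap K S : FL K S →ₗ[K] FreeLieAlgebra K X)
        (Idl K S).toSubmodule with
      lie_mem' := fun {x y} hx hy => by
        show fmap K S ⁅x, y⁆ ∈ (Idl K S).toSubmodule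
        rw [LieHom.map_lie]
        exact LieSubmodule.lie_mem _ hy }
  have h : ∀ t, of K t ∈ Q := fun t => by
    show fmap K S (of K t) ∈ (Idl K S).toSubmodule
    rw [fmap_of]
    exact Fgen_mem_ideal K S t
  exact mem_of_forall_of K Q h a

lemma lie_of_mem_range (s : ↥S) (a : FL K S) :
    ⁅of K (s : X), fmap K S a⁆ ∈ (fmap K S).range := by
  let Q : LieSubalgebra K (FL K S) :=
    { carrier := {b | ⁅of K (s : X), fmap K S b⁆ ∈ (fmap K S).range}
      add_mem' := fun {b c} hb hc => by
        show ⁅of K (s : X), fmap K S (b + c)⁆ ∈ (fmap K S).range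
        rw [map_add, lie_add]
        exact add_mem hb hc
      zero_mem' := by
        show ⁅of K (s : X), fmap K S 0⁆ ∈ (fmap K S).range
        rw [map_zero, lie_zero]
        exact zero_mem _
      smul_mem' := fun t b hb => by
        show ⁅of K (s : X), fmap K S (t • b)⁆ ∈ (fmap K S).range
        rw [map_smul, lie_smul]
        exact Submodule.smul_mem _ t hb
      lie_mem' := fun {b c} hb hc => by
        show ⁅of K (s : X), fmap K S ⁅b, c⁆⁆ ∈ (fmap K S).range
        rw [LieHom.map_lie, leibniz_lie]
        exact add_mem (LieSubalgebra.lie_mem _ hb ((fmap K S).mem_range_self c))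
          (LieSubalgebra.lie_mem _ ((fmap K S).mem_range_self b) hc) }
  have h : ∀ t, of K t ∈ Q := fun t => by
    show ⁅of K (s : X), fmap K S (of K t)⁆ ∈ (fmap K S).range
    rw [fmap_of]
    obtain ⟨l, x⟩ := t
    rw [← Fgen_cons, ← fmap_of]
    exact (fmap K S).mem_range_self _
  exact mem_of_forall_of K Q h a

lemma lie_mem_range (y : FreeLieAlgebra K X) (z : FreeLieAlgebra K X)
    (hz : z ∈ (fmap K S).range) : ⁅y, z⁆ ∈ (fmap K S).range := by
  obtain ⟨a, rfl⟩ := (fmap K S).mem_range _ |>.mp hz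
  let Q : LieSubalgebra K (FreeLieAlgebra K X) :=
    { carrier := {y | ∀ b : FL K S, ⁅y, fmap K S b⁆ ∈ (fmap K S).range}
      add_mem' := fun {y₁ y₂} h₁ h₂ b => by
        rw [add_lie]; exact add_mem (h₁ b) (h₂ b)
      zero_mem' := fun b => by rw [zero_lie]; exact zero_mem _
      smul_mem' := fun t y₁ h₁ b => by
        rw [smul_lie]; exact Submodule.smul_mem _ t (h₁ b)
      lie_mem' := fun {y₁ y₂} h₁ h₂ b => by
        rw [lie_lie]
        apply sub_mem
        · obtain ⟨c, hc⟩ := (fmap K S).mem_range _ |>.mp (h₂ b)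
          rw [← hc]; exact h₁ c
        · obtain ⟨c, hc⟩ := (fmap K S).mem_range _ |>.mp (h₁ b)
          rw [← hc]; exact h₂ c }
  have h : ∀ x : X, of K x ∈ Q := fun x => by
    by_cases hx : x ∈ S
    · exact fun b => lie_of_mem_range K S ⟨x, hx⟩ b
    · intro b
      have hofx : of K x = fmap K S (of K (([], ⟨x, hx⟩) : T S)) := by
        rw [fmap_of]; rfl
      rw [hofx, ← LieHom.map_lie]
      exact (fmap K S).mem_range_self _
  exact mem_of_forall_of K Q h y a

lemma range_eq_ideal :
    (fmap K S).range.toSubmodule = (Idl K S).toSubmodule := by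
  apply le_antisymm
  · intro z hz
    obtain ⟨a, rfl⟩ := (fmap K S).mem_range _ |>.mp hz
    exact fmap_mem_ideal K S a
  · let J : LieIdeal K (FreeLieAlgebra K X) :=
      { (fmap K S).range.toSubmodule with
        lie_mem := fun {y z} hz => lie_mem_range K S y z hz }
    have hJ : Idl K S ≤ J := by
      rw [LieSubmodule.lieSpan_le]
      rintro _ ⟨x, hx, rfl⟩
      show of K x ∈ (fmap K S).range
      have : of K x = fmap K S (of K (([], ⟨x, hx⟩) : T S)) := by rw [fmap_of]; rfl
      rw [this]
      exact (fmap K S).mem_range_self _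
    exact fun z hz => hJ hz

end Main
end Elim



open FreeLieAlgebra

/-- Elimination theorem, part (b): with `S ⊆ X` and `T` the set of sequences
`(s₁, …, sₙ, x)` with `sᵢ ∈ S` and `x ∈ X \ S`, the map
`(s₁, …, sₙ, x) ↦ ad(s₁)⋯ad(sₙ)(x)` extends to an isomorphism of Lie algebras
from `L(T)` onto the ideal `𝔞` of `L(X)` generated by `X \ S`. -/
theorem free_lie_algebra_elimination_ideal_free (K : Type*) [Field K] {X : Type*}
    (S : Set X) :
    ∃ ψ : FreeLieAlgebra K (List ↥S × ↥Sᶜ) →ₗ⁅K⁆ FreeLieAlgebra K X,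
      Function.Injective ψ ∧
      (ψ.range.toSubmodule =
        (LieSubmodule.lieSpan K (FreeLieAlgebra K X) (of K '' Sᶜ) :
          LieIdeal K (FreeLieAlgebra K X)).toSubmodule) ∧
      ∀ t : List ↥S × ↥Sᶜ,
        ψ (of K t) =
          (t.1.map Subtype.val).foldr (fun s b => ⁅of K s, b⁆) (of K (t.2 : X)) := by
  exact ⟨Elim.fmap K S, Elim.fmap_injective K S, Elim.range_eq_ideal K S,
    fun t => Elim.fmap_of K S t⟩
end
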